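/- Let G and H be closed permutation groups on an infinite set X with H ≤ G. If G and H are orbit-equivalent and G acts locally rigidly on X, then H = G. -/

import Mathlib

/-- A closed subgroup of Sym(X): contains every permutation that agrees with elements of the
    group on every finite set. -/
def IsClosedGroup {X : Type*} (H : Subgroup (Equiv.Perm X)) : Prop :=
  ∀ g : Equiv.Perm X, (∀ s : Finset X, ∃ h ∈ H, ∀ x ∈ s, h x = g x) → g ∈ H

/-- closed orbit-equivalent H ≤ G with G acting locally rigidly implies H = G. -/
theorem stmt4 {X : Type*} [Infinite X] [DecidableEq X] (G H : Subgroup (Equiv.Perm X))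
    (hle : H ≤ G) (hGc : IsClosedGroup G) (hHc : IsClosedGroup H)
    (horb : ∀ s t : Finset X, (∃ g ∈ G, s.image g = t) ↔ ∃ h ∈ H, s.image h = t)
    (hlr : ∀ U : Finset X, ∃ V : Finset X, U ⊆ V ∧
      ∀ g ∈ G, V.image g = V → ∀ x ∈ U, g x = x) :
    H = G := by
  refine le_antisymm hle fun g hg => ?_
  apply hHc
  intro s
  obtain ⟨V, hsV, hV⟩ := hlr s
  obtain ⟨h, hH, hht⟩ := (horb V (V.image g)).mp ⟨g, hg, rfl⟩
  refine ⟨h, hH, fun x hx => ?_⟩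
  have hmem : (h⁻¹ * g) ∈ G := G.mul_mem (G.inv_mem (hle hH)) hg
  have himg : V.image (h⁻¹ * g) = V := by
    have h1 : V.image ⇑(h⁻¹ * g) = (V.image g).image ⇑h⁻¹ := by
      rw [Finset.image_image]; rfl
    rw [h1, ← hht, Finset.image_image]
    have h2 : ⇑h⁻¹ ∘ ⇑h = id := by ext y; simp
    rw [h2, Finset.image_id]
  have hfix := hV _ hmem himg x hx
  have : h⁻¹ (g x) = x := hfix
  calc h x = h (h⁻¹ (g x)) := by rw [this]
    _ = g x := by simp
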